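/- For N = 1, the function φ(x) = exp(-x²/8)/(1 + x⁴) belongs to the weighted Sobolev space X (i.e. ∫_ℝ |φ'(x)|² e^{x²/4} dx < ∞), and there exists no real number r such that φ(x) ≤ r·exp(-x²/4) for almost every x ∈ ℝ. -/

import Mathlib

open MeasureTheory

noncomputable section

/-- The function `φ(x) = exp(-x²/8)/(1 + x⁴)`. -/
def phi (x : ℝ) : ℝ := Real.exp (-x ^ 2 / 8) / (1 + x ^ 4)

lemma phi_deriv (x : ℝ) : deriv phi x =
    Real.exp (-x ^ 2 / 8) * (-(x / 4) * (1 + x ^ 4) - 4 * x ^ 3) / (1 + x ^ 4) ^ 2 := by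
  have hd : (0:ℝ) < 1 + x ^ 4 := by positivity
  have h1 : HasDerivAt (fun y : ℝ => -y ^ 2 / 8) (-x / 4) x := by
    have := ((hasDerivAt_pow 2 x).neg).div_const 8
    refine this.congr_deriv ?_
    push_cast; ring
  have h2 : HasDerivAt (fun y : ℝ => Real.exp (-y ^ 2 / 8))
      (Real.exp (-x ^ 2 / 8) * (-x / 4)) x := h1.exp
  have h3 : HasDerivAt (fun y : ℝ => 1 + y ^ 4) (4 * x ^ 3) x := by
    simpa using (hasDerivAt_pow 4 x).const_add 1
  have h4 := h2.div h3 hd.ne'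
  have h5 : HasDerivAt phi
      (Real.exp (-x ^ 2 / 8) * (-(x / 4) * (1 + x ^ 4) - 4 * x ^ 3) / (1 + x ^ 4) ^ 2) x := by
    refine h4.congr_deriv ?_
    ring
  exact h5.deriv

lemma phi_key (x : ℝ) :
    (deriv phi x) ^ 2 * Real.exp (x ^ 2 / 4)
    = (x / 4 * (1 + x ^ 4) + 4 * x ^ 3) ^ 2 / (1 + x ^ 4) ^ 4 := by
  rw [phi_deriv x]
  have hd : (0:ℝ) < 1 + x ^ 4 := by positivity
  have he : Real.exp (-x ^ 2 / 8) ^ 2 * Real.exp (x ^ 2 / 4) = 1 := by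
    rw [sq, ← Real.exp_add, ← Real.exp_add, ← Real.exp_zero]
    ring_nf
  rw [div_pow, mul_pow, div_mul_eq_mul_div, mul_right_comm, he, one_mul]
  congr 1 <;> ring

lemma phi_bound (x : ℝ) :
    (x / 4 * (1 + x ^ 4) + 4 * x ^ 3) ^ 2 / (1 + x ^ 4) ^ 4 ≤ 32 * (1 + x ^ 2)⁻¹ := by
  have hd : (0:ℝ) < (1 + x ^ 4) ^ 4 := by positivity
  have h2 : (0:ℝ) < 1 + x ^ 2 := by positivity
  rw [← div_eq_mul_inv, div_le_div_iff₀ hd h2]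
  nlinarith [sq_nonneg x, sq_nonneg (x^2), sq_nonneg (x^2-1), sq_nonneg (x^3-x),
    sq_nonneg (x^4-x^2), sq_nonneg (x^5-x^3), sq_nonneg (x^6-x^4), sq_nonneg (x^7-x^5),
    sq_nonneg (x^8-x^6), sq_nonneg (x^4-1), sq_nonneg (x^6-1), sq_nonneg (x^8-1)]

/-- For `N = 1`, `φ(x) = exp(-x²/8)/(1+x⁴)` belongs to the weighted Sobolev
space `X`, i.e. `∫ |φ'|² e^{x²/4} dx < ∞`, yet there is no `r ∈ ℝ` with
`φ(x) ≤ r·exp(-x²/4)` for a.e. `x`. -/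
theorem no_comparison_with_gaussian :
    Integrable (fun x : ℝ => (deriv phi x) ^ 2 * Real.exp (x ^ 2 / 4)) ∧
      ¬∃ r : ℝ, ∀ᵐ x : ℝ ∂volume, phi x ≤ r * Real.exp (-x ^ 2 / 4) := by
  constructor
  · have heq : (fun x : ℝ => (deriv phi x) ^ 2 * Real.exp (x ^ 2 / 4))
        = fun x : ℝ => (x / 4 * (1 + x ^ 4) + 4 * x ^ 3) ^ 2 / (1 + x ^ 4) ^ 4 :=
      funext fun x => phi_key x
    rw [heq]
    refine (integrable_inv_one_add_sq.const_mul 32).mono' ?_ ?_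
    · refine Continuous.aestronglyMeasurable ?_
      exact Continuous.div (by continuity) (by continuity)
        (fun x => by positivity)
    · refine Filter.Eventually.of_forall fun x => ?_
      rw [Real.norm_eq_abs, abs_of_nonneg (by positivity)]
      exact phi_bound x
  · rintro ⟨r, hr⟩
    set M : ℝ := 27648 * (|r| + 1) + 1 with hMdef
    have hM1 : (1:ℝ) ≤ M := by nlinarith [abs_nonneg r]
    have hsub : Set.Ici M ⊆ {x : ℝ | ¬ phi x ≤ r * Real.exp (-x ^ 2 / 4)} := by
      intro x hx
      simp only [Set.mem_setOf_eq, not_le]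
      have hx1 : (1:ℝ) ≤ x := le_trans hM1 hx
      have ht : 27648 * (|r| + 1) ≤ x ^ 2 := by
        have hxM : M ≤ x := hx
        nlinarith [abs_nonneg r]
      have hx4 : (1:ℝ) ≤ x ^ 4 := by nlinarith [sq_nonneg (x - 1), sq_nonneg (x ^ 2 - 1), sq_nonneg x]
      have hdp : (0:ℝ) < 1 + x ^ 4 := by positivity
      have hmain : r * (1 + x ^ 4) < Real.exp (x ^ 2 / 8) := by
        have h3 : Real.exp (x ^ 2 / 24) ^ 3 = Real.exp (x ^ 2 / 8) := by
          rw [← Real.exp_nat_mul]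
          congr 1
          push_cast; ring
        have h4 : x ^ 2 / 24 + 1 ≤ Real.exp (x ^ 2 / 24) := by
          have := Real.add_one_le_exp (x ^ 2 / 24)
          linarith
        have h5 : (x ^ 2 / 24 + 1) ^ 3 ≤ Real.exp (x ^ 2 / 24) ^ 3 :=
          pow_le_pow_left₀ (by positivity) h4 3
        have h6 : 27648 * (|r| + 1) * x ^ 4 ≤ x ^ 2 * x ^ 4 :=
          mul_le_mul_of_nonneg_right ht (by positivity)
        have h7 : r * (1 + x ^ 4) < (x ^ 2 / 24 + 1) ^ 3 := by
          nlinarith [le_abs_self r, abs_nonneg r, sq_nonneg x]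
        calc r * (1 + x ^ 4) < (x ^ 2 / 24 + 1) ^ 3 := h7
          _ ≤ Real.exp (x ^ 2 / 24) ^ 3 := h5
          _ = Real.exp (x ^ 2 / 8) := h3
      have hsplit : Real.exp (-x ^ 2 / 8) = Real.exp (x ^ 2 / 8) * Real.exp (-x ^ 2 / 4) := by
        rw [← Real.exp_add]; ring_nf
      show r * Real.exp (-x ^ 2 / 4) < phi x
      unfold phi
      rw [lt_div_iff₀ hdp, hsplit,
        show r * Real.exp (-x ^ 2 / 4) * (1 + x ^ 4)
          = r * (1 + x ^ 4) * Real.exp (-x ^ 2 / 4) from by ring]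
      exact mul_lt_mul_of_pos_right hmain (Real.exp_pos _)
    have h0 : volume {x : ℝ | ¬ phi x ≤ r * Real.exp (-x ^ 2 / 4)} = 0 := ae_iff.mp hr
    have hIci := measure_mono_null hsub h0
    rw [Real.volume_Ici] at hIci
    exact (ENNReal.top_ne_zero) hIci
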